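/- Let x be supported on T, T^k an estimated support with ℓ = |T ∩ T^k|, |T|=K, |T^k|=Lk, and suppose δ_{K+Lk−ℓ} < 1. Then ‖Φ'_{T∖T^k} P^⊥_{T^k} Φ x‖₂ ≥ (1 − δ_{K+Lk−ℓ}) ‖x_{T∖T^k}‖₂. -/

import Mathlib

open Finset Matrix

/-- Squared-entries `ℓ₂` norm of a finite real vector. -/
noncomputable def l2 {ι : Type*} [Fintype ι] (x : ι → ℝ) : ℝ :=
  Real.sqrt (∑ i, x i ^ 2)

/-- A vector is `K`-sparse if it has at most `K` nonzero entries. -/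
def Ksparse {n : ℕ} (K : ℕ) (x : Fin n → ℝ) : Prop :=
  (Finset.univ.filter (fun i => x i ≠ 0)).card ≤ K

/-- `δ` is a valid restricted isometry constant of order `K` for `Φ`. -/
def RIP {m n : ℕ} (Φ : Matrix (Fin m) (Fin n) ℝ) (K : ℕ) (δ : ℝ) : Prop :=
  ∀ x : Fin n → ℝ, Ksparse K x →
    (1 - δ) * ∑ i, x i ^ 2 ≤ ∑ i, (Φ.mulVec x) i ^ 2 ∧
    ∑ i, (Φ.mulVec x) i ^ 2 ≤ (1 + δ) * ∑ i, x i ^ 2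

/-- Column submatrix `Φ_S`. -/
def colSub {m n : ℕ} (Φ : Matrix (Fin m) (Fin n) ℝ) (S : Finset (Fin n)) :
    Matrix (Fin m) S ℝ := fun r c => Φ r c

/-- Gram matrix `Φ_S' Φ_S`. -/
noncomputable def gram {m n : ℕ} (Φ : Matrix (Fin m) (Fin n) ℝ) (S : Finset (Fin n)) :
    Matrix S S ℝ := (colSub Φ S)ᵀ * colSub Φ S

/-- Pseudoinverse `Φ_S^† = (Φ_S'Φ_S)⁻¹ Φ_S'` (for `Φ_S` of full column rank). -/
noncomputable def pinv {m n : ℕ} (Φ : Matrix (Fin m) (Fin n) ℝ) (S : Finset (Fin n)) :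
    Matrix S (Fin m) ℝ := (gram Φ S)⁻¹ * (colSub Φ S)ᵀ

/-- Projection `P_S = Φ_S Φ_S^†` onto the span of the columns of `Φ_S`. -/
noncomputable def proj {m n : ℕ} (Φ : Matrix (Fin m) (Fin n) ℝ) (S : Finset (Fin n)) :
    Matrix (Fin m) (Fin m) ℝ := colSub Φ S * pinv Φ S

/-- Projection `P_S^⊥ = I - P_S`. -/
noncomputable def projPerp {m n : ℕ} (Φ : Matrix (Fin m) (Fin n) ℝ) (S : Finset (Fin n)) :
    Matrix (Fin m) (Fin m) ℝ := 1 - proj Φ S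

/-- Extension of a vector on `S` to `Fin n` by zero. -/
noncomputable def extV {n : ℕ} (S : Finset (Fin n)) (v : S → ℝ) : Fin n → ℝ :=
  fun i => if h : i ∈ S then v ⟨i, h⟩ else 0

lemma mulVec_extV {m n : ℕ} (Φ : Matrix (Fin m) (Fin n) ℝ) (S : Finset (Fin n)) (v : S → ℝ) :
    Φ.mulVec (extV S v) = (colSub Φ S).mulVec v := by
  funext r
  simp only [Matrix.mulVec, dotProduct]
  have h1 : ∑ j : Fin n, Φ r j * extV S v j = ∑ j ∈ S, Φ r j * extV S v j := by
    refine (Finset.sum_subset (Finset.subset_univ S) ?_).symm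
    intro j _ hj
    simp [extV, hj]
  rw [h1, ← Finset.sum_coe_sort S (fun j => Φ r j * extV S v j)]
  refine Finset.sum_congr rfl fun j _ => ?_
  simp [extV, colSub, j.2]

lemma sum_sq_extV {n : ℕ} (S : Finset (Fin n)) (v : S → ℝ) :
    ∑ i, extV S v i ^ 2 = ∑ j : S, v j ^ 2 := by
  have h1 : ∑ i : Fin n, extV S v i ^ 2 = ∑ i ∈ S, extV S v i ^ 2 := by
    refine (Finset.sum_subset (Finset.subset_univ S) ?_).symm
    intro j _ hj
    simp [extV, hj]
  rw [h1, ← Finset.sum_coe_sort S (fun j => extV S v j ^ 2)]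
  refine Finset.sum_congr rfl fun j _ => ?_
  simp [extV, j.2]

lemma dotProduct_self_eq_sum_sq {m : ℕ} (u : Fin m → ℝ) :
    u ⬝ᵥ u = ∑ i, u i ^ 2 := by
  simp [dotProduct, sq]

/-- Lower bound for the residual correlation with the missing support:
`‖Φ'_{T∖Tᵏ} P⊥_{Tᵏ} Φ x‖₂ ≥ (1-δ_{K+Lk-ℓ}) ‖x_{T∖Tᵏ}‖₂`. -/
theorem residual_correlation_lower_bound {m n : ℕ} (Φ : Matrix (Fin m) (Fin n) ℝ)
    (K L k : ℕ) (x : Fin n → ℝ) (T Tk : Finset (Fin n))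
    (hsupp : ∀ i, i ∉ T → x i = 0) (hT : T.card = K) (hTk : Tk.card = L * k)
    (δ : ℝ) (hδ0 : 0 ≤ δ) (hδ1 : δ < 1)
    (hRIP : RIP Φ (K + L * k - (T ∩ Tk).card) δ) :
    (1 - δ) * l2 (fun j : (T \ Tk : Finset (Fin n)) => x j.1) ≤
      l2 ((colSub Φ (T \ Tk))ᵀ.mulVec ((projPerp Φ Tk).mulVec (Φ.mulVec x))) := by
  classical
  set A : Finset (Fin n) := T \ Tk with hAdef
  set C : Matrix (Fin m) Tk ℝ := colSub Φ Tk with hCdef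
  set CA : Matrix (Fin m) A ℝ := colSub Φ A with hCAdef
  set xA : A → ℝ := fun j => x j.1 with hxAdef
  have hlK : (T ∩ Tk).card ≤ K := hT ▸ Finset.card_le_card Finset.inter_subset_left
  -- gram matrix of Tk is invertible
  have hdet : IsUnit (gram Φ Tk).det := by
    rw [isUnit_iff_ne_zero]
    intro hdet0
    obtain ⟨v, hv0, hv⟩ := Matrix.exists_mulVec_eq_zero_iff.2 hdet0
    have hsp : Ksparse (K + L * k - (T ∩ Tk).card) (extV Tk v) := by
      have hsub : (Finset.univ.filter (fun i => extV Tk v i ≠ 0)) ⊆ Tk := by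
        intro i hi
        simp only [Finset.mem_filter, Finset.mem_univ, true_and] at hi
        by_contra hiTk
        exact hi (by simp [extV, hiTk])
      exact le_trans (Finset.card_le_card hsub) (by omega)
    have hR := (hRIP _ hsp).1
    rw [mulVec_extV, sum_sq_extV] at hR
    have hz : (C.mulVec v) ⬝ᵥ (C.mulVec v) = 0 := by
      have : v ⬝ᵥ ((gram Φ Tk).mulVec v) = 0 := by rw [hv]; simp
      rwa [_root_.gram, ← Matrix.mulVec_mulVec, Matrix.dotProduct_mulVec,
        Matrix.vecMul_transpose] at this
    have hsum0 : ∑ i, (C.mulVec v) i ^ 2 = 0 := by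
      rw [← dotProduct_self_eq_sum_sq]; exact hz
    rw [hsum0] at hR
    have hvpos : 0 < ∑ j : Tk, v j ^ 2 := by
      have hne : ∃ j : Tk, v j ≠ 0 := by
        by_contra h
        push_neg at h
        exact hv0 (funext fun j => h j)
      obtain ⟨j, hj⟩ := hne
      refine Finset.sum_pos' (fun i _ => sq_nonneg _) ⟨j, Finset.mem_univ _, ?_⟩
      positivity
    nlinarith
  have hGsymm : (gram Φ Tk)ᵀ = gram Φ Tk := by
    simp [_root_.gram, Matrix.transpose_mul]
  have hginv : (gram Φ Tk)⁻¹ * gram Φ Tk = 1 := Matrix.nonsing_inv_mul _ hdet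
  have hPC : proj Φ Tk * C = C := by
    have h : proj Φ Tk * C = C * ((gram Φ Tk)⁻¹ * gram Φ Tk) := by
      simp only [proj, pinv, _root_.gram, hCdef, Matrix.mul_assoc]
    rw [h, hginv, Matrix.mul_one]
  have hPsq : proj Φ Tk * proj Φ Tk = proj Φ Tk := by
    calc proj Φ Tk * proj Φ Tk = (proj Φ Tk * C) * pinv Φ Tk := by
          simp only [proj, hCdef, Matrix.mul_assoc]
      _ = proj Φ Tk := by rw [hPC]; rfl
  have hPsymm : (proj Φ Tk)ᵀ = proj Φ Tk := by
    have : (proj Φ Tk)ᵀ = C * ((gram Φ Tk)ᵀ⁻¹ * Cᵀ) := by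
      simp only [proj, pinv, Matrix.transpose_mul, Matrix.transpose_transpose,
        ← Matrix.transpose_nonsing_inv, Matrix.mul_assoc, hCdef]
    rw [this, hGsymm]
    simp only [proj, pinv, Matrix.mul_assoc, hCdef]
  have hQ : (projPerp Φ Tk)ᵀ * projPerp Φ Tk = projPerp Φ Tk := by
    simp only [projPerp, Matrix.transpose_sub, Matrix.transpose_one, hPsymm,
      Matrix.sub_mul, Matrix.mul_sub, Matrix.one_mul, Matrix.mul_one, hPsq]
    abel
  have hQC : projPerp Φ Tk * C = 0 := by
    simp [projPerp, Matrix.sub_mul, hPC]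
  -- decomposition of x
  set yB : Tk → ℝ := fun j => if j.1 ∈ T then x j.1 else 0 with hyBdef
  have hx : x = fun i => extV A xA i + extV Tk yB i := by
    funext i
    by_cases hiTk : i ∈ Tk
    · have hiA : i ∉ A := by simp [hAdef, hiTk]
      by_cases hiT : i ∈ T
      · simp [extV, hiA, hiTk, hyBdef, hiT]
      · simp [extV, hiA, hiTk, hyBdef, hiT, hsupp i hiT]
    · by_cases hiT : i ∈ T
      · have hiA : i ∈ A := by simp [hAdef, hiT, hiTk]
        simp [extV, hiA, hiTk, hxAdef]
      · have hiA : i ∉ A := by simp [hAdef, hiT]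
        simp [extV, hiA, hiTk, hsupp i hiT]
  set vA : Fin m → ℝ := CA.mulVec xA with hvAdef
  set u : Fin m → ℝ := (projPerp Φ Tk).mulVec (Φ.mulVec x) with hudef
  have hu : u = (projPerp Φ Tk).mulVec vA := by
    have hx' : Φ.mulVec x = vA + C.mulVec yB := by
      have : Φ.mulVec x = Φ.mulVec (extV A xA) + Φ.mulVec (extV Tk yB) := by
        conv_lhs => rw [hx]
        rw [← Matrix.mulVec_add]
        congr 1
      rw [this, mulVec_extV, mulVec_extV, hvAdef, hCAdef, hCdef]
    have h0 : projPerp Φ Tk *ᵥ (C *ᵥ yB) = 0 := by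
      rw [Matrix.mulVec_mulVec, hQC]; simp
    rw [hudef, hx', Matrix.mulVec_add, h0, add_zero]
  -- the witness vector
  set z : Tk → ℝ := (pinv Φ Tk).mulVec vA with hzdef
  set w : Fin n → ℝ := fun i => extV A xA i - extV Tk z i with hwdef
  have hΦw : Φ.mulVec w = u := by
    have h1 : Φ.mulVec w = Φ.mulVec (extV A xA) - Φ.mulVec (extV Tk z) := by
      rw [hwdef, ← Matrix.mulVec_sub]
      congr 1
    rw [h1, mulVec_extV, mulVec_extV, ← hCAdef, ← hCdef, ← hvAdef, hzdef,
      Matrix.mulVec_mulVec, hu]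
    have : C * pinv Φ Tk = proj Φ Tk := rfl
    rw [this, projPerp, Matrix.sub_mulVec, Matrix.one_mulVec]
  -- sparsity of w
  have hAcard : A.card + (T ∩ Tk).card = K := by
    rw [hAdef, ← hT]; exact Finset.card_sdiff_add_card_inter T Tk
  have hwsp : Ksparse (K + L * k - (T ∩ Tk).card) w := by
    refine le_trans (Finset.card_le_card (t := A ∪ Tk) ?_) ?_
    · intro i hi
      simp only [Finset.mem_filter, Finset.mem_univ, true_and] at hi
      by_contra hiU
      simp only [Finset.mem_union, not_or] at hiU
      exact hi (by simp [hwdef, extV, hiU.1, hiU.2])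
    · have hd : Disjoint A Tk := Finset.sdiff_disjoint
      rw [Finset.card_union_of_disjoint hd, hTk]
      omega
  have hR := (hRIP w hwsp).1
  rw [hΦw] at hR
  -- lower bound on ∑ w²
  set b2 : ℝ := ∑ j : A, xA j ^ 2 with hb2def
  have hwA : ∑ i ∈ A, w i ^ 2 = b2 := by
    rw [hb2def, Finset.sum_coe_sort A (fun j => x j ^ 2)]
    refine Finset.sum_congr rfl fun i hi => ?_
    have hiTk : i ∉ Tk := (Finset.mem_sdiff.1 hi).2
    simp [hwdef, extV, hi, hiTk, hxAdef]
  have hwge : b2 ≤ ∑ i, w i ^ 2 := by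
    rw [← hwA]
    exact Finset.sum_le_sum_of_subset_of_nonneg (Finset.subset_univ A)
      (fun i _ _ => sq_nonneg _)
  have huu : (1 - δ) * b2 ≤ u ⬝ᵥ u := by
    rw [dotProduct_self_eq_sum_sq]
    calc (1 - δ) * b2 ≤ (1 - δ) * ∑ i, w i ^ 2 := by
          apply mul_le_mul_of_nonneg_left hwge (by linarith)
      _ ≤ ∑ i, u i ^ 2 := hR
  -- inner product identity
  have hinner : (CAᵀ.mulVec u) ⬝ᵥ xA = u ⬝ᵥ u := by
    have h1 : (CAᵀ.mulVec u) ⬝ᵥ xA = u ⬝ᵥ vA := by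
      rw [Matrix.mulVec_transpose, ← Matrix.dotProduct_mulVec, ← hvAdef]
    have hPu : (projPerp Φ Tk)ᵀ *ᵥ u = u := by
      rw [hu, Matrix.mulVec_mulVec, hQ]
    have h2 : u ⬝ᵥ u = u ⬝ᵥ vA := by
      calc u ⬝ᵥ u = u ⬝ᵥ (projPerp Φ Tk *ᵥ vA) := by rw [← hu]
        _ = (u ᵥ* projPerp Φ Tk) ⬝ᵥ vA := Matrix.dotProduct_mulVec _ _ _
        _ = ((projPerp Φ Tk)ᵀ *ᵥ u) ⬝ᵥ vA := by rw [Matrix.mulVec_transpose]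
        _ = u ⬝ᵥ vA := by rw [hPu]
    rw [h1, h2]
  -- Cauchy-Schwarz
  have hCS : (CAᵀ.mulVec u) ⬝ᵥ xA ≤ l2 (CAᵀ.mulVec u) * l2 xA := by
    have h := Real.sum_mul_le_sqrt_mul_sqrt Finset.univ
      (fun j => (CAᵀ.mulVec u) j) (fun j => xA j)
    simpa [dotProduct, l2] using h
  -- conclude
  set a : ℝ := l2 (CAᵀ.mulVec u) with hadef
  set b : ℝ := l2 xA with hbdef
  have hbnn : 0 ≤ b := Real.sqrt_nonneg _
  have hann : 0 ≤ a := Real.sqrt_nonneg _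
  have hbb : b * b = b2 := by
    rw [hbdef, l2]
    exact Real.mul_self_sqrt (Finset.sum_nonneg fun j _ => sq_nonneg _)
  have key : (1 - δ) * (b * b) ≤ a * b := by
    calc (1 - δ) * (b * b) = (1 - δ) * b2 := by rw [hbb]
      _ ≤ u ⬝ᵥ u := huu
      _ = (CAᵀ.mulVec u) ⬝ᵥ xA := hinner.symm
      _ ≤ a * b := hCS
  rcases eq_or_lt_of_le hbnn with hb0 | hbpos
  · rw [← hb0, mul_zero]
    exact hann
  · have key' : ((1 - δ) * b) * b ≤ a * b := by rw [mul_assoc]; exact key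
    exact le_of_mul_le_mul_right key' hbpos
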